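/- arXiv:2309.05881 — 2 statements merged into one kernel-verified Lean document; each statement's English description precedes it below -/
import Mathlib

section
/- For every pre-positional strategy, the probability that at some round t the multigraph G_t contains an induced simple (n−1)-cycle tends to 0 as n → ∞; that is, a.a.s. no pre-positional semi-random graph process ever produces a multigraph containing an induced simple (n−1)-cycle. -/
open Filter

/-- A pre-positional strategy: the player chooses `v_t` from the history of
previously added edges (each recorded as the pair `(u_s, v_s)`). -/
abbrev PreStrategy (n : ℕ) := List (Fin n × Fin n) → Fin n

/-- A post-positional strategy: the player chooses `v_t` from the history and
the random square `u_t`. -/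
abbrev PostStrategy (n : ℕ) := List (Fin n × Fin n) → Fin n → Fin n

/-- Build the history of the pre-positional process from the given history `h`
and the (remaining) sequence of random squares. -/
def preBuildAux {n : ℕ} (S : PreStrategy n) :
    List (Fin n × Fin n) → List (Fin n) → List (Fin n × Fin n)
  | h, [] => h
  | h, u :: us => preBuildAux S (h ++ [(u, S h)]) us

/-- The history (list of edges, in order) of the pre-positional process driven
by strategy `S` when the random squares are `us`. -/
def preTraj {n : ℕ} (S : PreStrategy n) (us : List (Fin n)) : List (Fin n × Fin n) :=
  preBuildAux S [] us

def postBuildAux {n : ℕ} (S : PostStrategy n) :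
    List (Fin n × Fin n) → List (Fin n) → List (Fin n × Fin n)
  | h, [] => h
  | h, u :: us => postBuildAux S (h ++ [(u, S h u)]) us

/-- The history (list of edges, in order) of the post-positional process driven
by strategy `S` when the random squares are `us`. -/
def postTraj {n : ℕ} (S : PostStrategy n) (us : List (Fin n)) : List (Fin n × Fin n) :=
  postBuildAux S [] us

/-- The underlying simple graph of the multigraph whose edges are listed in `l`. -/
def simpleOf {n : ℕ} (l : List (Fin n × Fin n)) : SimpleGraph (Fin n) :=
  SimpleGraph.fromEdgeSet {e | ∃ p ∈ l, e = s(p.1, p.2)}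

open Classical in
/-- The probability, with respect to the uniformly random independent squares
`u_1, …, u_t`, that the history of the first `t` rounds of the pre-positional
process driven by `S` satisfies `P`. -/
noncomputable def probPre (n t : ℕ) (S : PreStrategy n)
    (P : List (Fin n × Fin n) → Prop) : ℝ :=
  ((Finset.univ.filter fun u : Fin t → Fin n => P (preTraj S (List.ofFn u))).card : ℝ) /
    (n : ℝ) ^ t

open Classical in
/-- The probability, with respect to the uniformly random independent squares
`u_1, …, u_t`, that the history of the first `t` rounds of the post-positional
process driven by `S` satisfies `P`. -/
noncomputable def probPost (n t : ℕ) (S : PostStrategy n)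
    (P : List (Fin n × Fin n) → Prop) : ℝ :=
  ((Finset.univ.filter fun u : Fin t → Fin n => P (postTraj S (List.ofFn u))).card : ℝ) /
    (n : ℝ) ^ t

/-- The list of edges (with multiplicity) of the sub-multigraph induced by `S`. -/
def inducedEdgeList {n : ℕ} (l : List (Fin n × Fin n)) (S : Finset (Fin n)) :
    List (Sym2 (Fin n)) :=
  (l.filter fun p => decide (p.1 ∈ S ∧ p.2 ∈ S)).map fun p => s(p.1, p.2)

/-- The multigraph whose edges are listed in `l` contains an induced simple
`(n-1)`-cycle: there is a set `S` of `n-1` vertices such that the sub-multigraph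
induced by `S` has no multiple edges, no loops, and is exactly a cycle on `S`
(every vertex of `S` has exactly two neighbours and the induced graph is connected). -/
def HasInducedCycle {n : ℕ} (l : List (Fin n × Fin n)) : Prop :=
  ∃ S : Finset (Fin n), S.card = n - 1 ∧
    (inducedEdgeList l S).Nodup ∧
    (∀ e ∈ inducedEdgeList l S, ¬ e.IsDiag) ∧
    (∀ v ∈ S,
      ((SimpleGraph.fromEdgeSet {e | e ∈ inducedEdgeList l S}).neighborSet v).ncard = 2) ∧
    ((SimpleGraph.fromEdgeSet {e | e ∈ inducedEdgeList l S}).induce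
        (S : Set (Fin n))).Connected

namespace NC
variable {n : ℕ}

/-- the list-level "is exactly a hamilton cycle on `{w}ᶜ`" predicate -/
def CL (w : Fin n) (L : List (Sym2 (Fin n))) : Prop :=
  L.Nodup ∧ (∀ e ∈ L, ¬ e.IsDiag) ∧ (∀ e ∈ L, ∀ x ∈ e, x ≠ w) ∧
  (∀ v : Fin n, v ≠ w →
    ((SimpleGraph.fromEdgeSet {e | e ∈ L}).neighborSet v).ncard = 2) ∧
  ((SimpleGraph.fromEdgeSet {e | e ∈ L}).induce
      ((({w}ᶜ : Finset (Fin n)) : Set (Fin n)))).Connected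

def insideL (w : Fin n) (l : List (Fin n × Fin n)) : List (Sym2 (Fin n)) :=
  inducedEdgeList l {w}ᶜ

def degL (v : Fin n) (L : List (Sym2 (Fin n))) : ℕ :=
  L.countP (fun e => decide (v ∈ e))

lemma degL_append (v : Fin n) (L1 L2 : List (Sym2 (Fin n))) :
    degL v (L1 ++ L2) = degL v L1 + degL v L2 :=
  List.countP_append

lemma degL_singleton (v a b : Fin n) :
    degL v [s(a,b)] = if v = a ∨ v = b then 1 else 0 := by
  by_cases h : v = a ∨ v = b <;>
    simp [degL, List.countP, List.countP.go, Sym2.mem_iff, h]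

lemma sum_degL (L : List (Sym2 (Fin n))) (hd : ∀ e ∈ L, ¬ e.IsDiag) :
    ∑ v : Fin n, degL v L = 2 * L.length := by
  induction L with
  | nil => simp [degL]
  | cons e T ih =>
    have hdT : ∀ e ∈ T, ¬ e.IsDiag := fun x hx => hd x (List.mem_cons_of_mem _ hx)
    have : ∀ v : Fin n, degL v (e :: T) = degL v [e] + degL v T := by
      intro v; rw [show e :: T = [e] ++ T from rfl, degL_append]
    simp only [this, Finset.sum_add_distrib, ih hdT]
    have he : ¬ e.IsDiag := hd e List.mem_cons_self
    obtain ⟨a, b⟩ := e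
    have hab : a ≠ b := by simpa [Sym2.isDiag_iff_proj_eq] using he
    have : ∑ v : Fin n, degL v [s(a,b)] = 2 := by
      simp only [degL_singleton]
      rw [Finset.sum_ite, Finset.sum_const, Finset.sum_const_zero]
      have : Finset.univ.filter (fun v : Fin n => v = a ∨ v = b) = {a, b} := by
        ext x; simp
      rw [this, Finset.card_pair hab]; simp
    rw [this]; ring_nf; simp [List.length_cons]; ring
-- L4 core: from nodup/nondiag and neighbor ncard = 2, degL = 2
lemma degL_of_ncard (L : List (Sym2 (Fin n))) (hnd : L.Nodup)
    (hd : ∀ e ∈ L, ¬ e.IsDiag) (v : Fin n)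
    (h2 : ((SimpleGraph.fromEdgeSet {e | e ∈ L}).neighborSet v).ncard = 2) :
    degL v L = 2 := by
  obtain ⟨x, y, hxy, hset⟩ := Set.ncard_eq_two.mp h2
  have hx : (SimpleGraph.fromEdgeSet {e | e ∈ L}).Adj v x := by
    rw [← SimpleGraph.mem_neighborSet, hset]; simp
  have hy : (SimpleGraph.fromEdgeSet {e | e ∈ L}).Adj v y := by
    rw [← SimpleGraph.mem_neighborSet, hset]; simp
  rw [SimpleGraph.fromEdgeSet_adj] at hx hy
  have hmem : ∀ e, (e ∈ L ∧ v ∈ e) ↔ (e = s(v,x) ∨ e = s(v,y)) := by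
    intro e
    constructor
    · rintro ⟨heL, hve⟩
      obtain ⟨a, b⟩ := e
      have hab : a ≠ b := by
        have := hd _ heL; simpa [Sym2.isDiag_iff_proj_eq] using this
      rcases Sym2.mem_iff.mp hve with rfl | rfl
      · -- e = s(v, b)
        have : b ∈ (SimpleGraph.fromEdgeSet {e | e ∈ L}).neighborSet v := by
          rw [SimpleGraph.mem_neighborSet, SimpleGraph.fromEdgeSet_adj]
          exact ⟨heL, hab⟩
        rw [hset] at this
        rcases this with rfl | rfl
        · exact Or.inl rfl
        · exact Or.inr rfl
      · -- e = s(a, v)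
        have : a ∈ (SimpleGraph.fromEdgeSet {e | e ∈ L}).neighborSet v := by
          rw [SimpleGraph.mem_neighborSet, SimpleGraph.fromEdgeSet_adj]
          refine ⟨by rwa [Sym2.eq_swap], fun h => hab h.symm⟩
        rw [hset] at this
        rcases this with rfl | rfl
        · exact Or.inl (Sym2.eq_swap)
        · exact Or.inr (Sym2.eq_swap)
    · rintro (rfl | rfl)
      · exact ⟨hx.1, Sym2.mem_mk_left _ _⟩
      · exact ⟨hy.1, Sym2.mem_mk_left _ _⟩
  have hne : s(v,x) ≠ s(v,y) := by
    intro h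
    rw [Sym2.eq_iff] at h
    rcases h with ⟨-, h⟩ | ⟨h1, h2⟩
    · exact hxy h
    · exact hxy (h2.trans h1)
  have hflt : (L.filter (fun e => decide (v ∈ e))).toFinset = {s(v,x), s(v,y)} := by
    ext e
    simp only [List.mem_toFinset, List.mem_filter, decide_eq_true_eq,
      Finset.mem_insert, Finset.mem_singleton]
    exact hmem e
  have hnodup : (L.filter (fun e => decide (v ∈ e))).Nodup := hnd.filter _
  have : (L.filter (fun e => decide (v ∈ e))).length
      = (L.filter (fun e => decide (v ∈ e))).toFinset.card :=
    (List.toFinset_card_of_nodup hnodup).symm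
  rw [hflt, Finset.card_pair hne] at this
  simpa [degL, List.countP_eq_length_filter] using this


lemma CL_degL {w : Fin n} {L : List (Sym2 (Fin n))} (h : CL w L) {v : Fin n}
    (hv : v ≠ w) : degL v L = 2 :=
  degL_of_ncard L h.1 h.2.1 v (h.2.2.2.1 v hv)

lemma degL_w_eq_zero {w : Fin n} {L : List (Sym2 (Fin n))}
    (hw : ∀ e ∈ L, ∀ x ∈ e, x ≠ w) : degL w L = 0 := by
  rw [degL, List.countP_eq_zero]
  intro e he
  simp only [decide_eq_true_eq]
  intro hmem
  exact hw e he w hmem rfl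

lemma CL_length {w : Fin n} {L : List (Sym2 (Fin n))} (h : CL w L) :
    L.length = n - 1 := by
  have hsum : ∑ v : Fin n, degL v L = 2 * L.length := sum_degL L h.2.1
  have hw0 : degL w L = 0 := degL_w_eq_zero h.2.2.1
  have hsplit : degL w L + ∑ v ∈ Finset.univ.erase w, degL v L
      = ∑ v : Fin n, degL v L := Finset.add_sum_erase _ (fun v => degL v L) (Finset.mem_univ w)
  have hall : ∀ v ∈ Finset.univ.erase w, degL v L = 2 := by
    intro v hv
    exact CL_degL h (Finset.ne_of_mem_erase hv)
  rw [Finset.sum_congr rfl hall, Finset.sum_const, hw0, zero_add] at hsplit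
  have hcard : (Finset.univ.erase w).card = n - 1 := by
    rw [Finset.card_erase_of_mem (Finset.mem_univ w), Finset.card_univ, Fintype.card_fin]
  rw [hcard] at hsplit
  simp only [smul_eq_mul] at hsplit
  omega

lemma degL_le_of_sublist {v : Fin n} {L1 L2 : List (Sym2 (Fin n))}
    (h : L1.Sublist L2) : degL v L1 ≤ degL v L2 :=
  List.Sublist.countP_le h

lemma mem_self_left (a b : Fin n) : a ∈ s(a,b) := Sym2.mem_mk_left a b

lemma degL_cons_self (v u : Fin n) (F : List (Sym2 (Fin n))) :
    degL v (F ++ [s(u,v)]) = degL v F + 1 := by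
  rw [degL_append, degL_singleton]
  simp

/-- uniqueness of the closing square -/
lemma close_unique {w : Fin n} {F : List (Sym2 (Fin n))} {v u1 u2 : Fin n}
    (h2w : u2 ≠ w) (hne : u1 ≠ u2)
    (c1 : CL w (F ++ [s(u1,v)])) (c2 : CL w (F ++ [s(u2,v)])) : False := by
  have h2v : u2 ≠ v := by
    intro h
    have := c2.2.1 s(u2,v) (by simp)
    rw [h] at this
    simp [Sym2.isDiag_iff_proj_eq] at this
  have hd1 : degL u2 (F ++ [s(u1,v)]) = 2 := CL_degL c1 h2w
  have hd1' : degL u2 (F ++ [s(u1,v)]) = degL u2 F := by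
    rw [degL_append, degL_singleton]
    have : ¬ (u2 = u1 ∨ u2 = v) := by
      rintro (h | h); exacts [hne h.symm, h2v h]
    simp [this]
  have hdF : degL u2 F = 2 := by omega
  have hd2 : degL u2 (F ++ [s(u2,v)]) = 2 := CL_degL c2 h2w
  have : degL u2 (F ++ [s(u2,v)]) = degL u2 F + 1 := by
    rw [degL_append, degL_singleton]; simp
  omega

open Classical in
/-- at most three squares can bring an `(n-3)`-edge configuration to distance one -/
lemma card_valid_le_three (hn : 5 ≤ n) (w : Fin n) (F : List (Sym2 (Fin n))) (v : Fin n) :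
    ((Finset.univ.filter
        (fun u : Fin n => u ≠ w ∧ ∃ e, CL w (F ++ [s(u,v), e]))).card : ℕ) ≤ 3 := by
  set Flt := Finset.univ.filter
      (fun u : Fin n => u ≠ w ∧ ∃ e, CL w (F ++ [s(u,v), e])) with hFlt
  rcases Finset.eq_empty_or_nonempty Flt with he | ⟨u1, hu1⟩
  · rw [he]; simp
  rw [hFlt, Finset.mem_filter] at hu1
  obtain ⟨-, h1w, e1, c1⟩ := hu1
  -- basic facts from the witness
  have hlen : F.length + 2 = n - 1 := by
    have := CL_length c1; simpa using this
  have hFsub : F.Sublist (F ++ [s(u1,v), e1]) := List.sublist_append_left _ _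
  have hdegFle : ∀ x : Fin n, x ≠ w → degL x F ≤ 2 := by
    intro x hx
    calc degL x F ≤ degL x (F ++ [s(u1,v), e1]) := degL_le_of_sublist hFsub
    _ = 2 := CL_degL c1 hx
  have hvw : v ≠ w := by
    refine (c1.2.2.1 s(u1,v) (by simp) v ?_)
    exact Sym2.mem_mk_right _ _
  have hdegv : degL v F ≤ 1 := by
    have h2 : degL v (F ++ [s(u1,v), e1]) = 2 := CL_degL c1 hvw
    have : degL v (F ++ [s(u1,v), e1]) = degL v F + degL v [s(u1,v), e1] := degL_append _ _ _
    have hone : 1 ≤ degL v [s(u1,v), e1] := by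
      have : degL v [s(u1,v)] = 1 := by rw [degL_singleton]; simp
      calc 1 = degL v [s(u1,v)] := this.symm
      _ ≤ degL v ([s(u1,v)] ++ [e1]) := degL_le_of_sublist (List.sublist_append_left _ _)
      _ = degL v [s(u1,v), e1] := rfl
    omega
  -- every valid u lies in D
  set T := (Finset.univ.erase w).erase v with hT
  set D := T.filter (fun x => degL x F ≤ 1) with hD
  have hsub : Flt ⊆ D := by
    intro u hu
    rw [hFlt, Finset.mem_filter] at hu
    obtain ⟨-, huw, e, c⟩ := hu
    have huv : u ≠ v := by
      intro h
      have := c.2.1 s(u,v) (by simp)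
      rw [h] at this
      simp [Sym2.isDiag_iff_proj_eq] at this
    have hdu : degL u F ≤ 1 := by
      have h2 : degL u (F ++ [s(u,v), e]) = 2 := CL_degL c huw
      have happ : degL u (F ++ [s(u,v), e]) = degL u F + degL u [s(u,v), e] := degL_append _ _ _
      have hone : 1 ≤ degL u [s(u,v), e] := by
        have h1 : degL u [s(u,v)] = 1 := by rw [degL_singleton]; simp
        calc 1 = degL u [s(u,v)] := h1.symm
        _ ≤ degL u ([s(u,v)] ++ [e]) := degL_le_of_sublist (List.sublist_append_left _ _)
        _ = degL u [s(u,v), e] := rfl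
      omega
    rw [hD, Finset.mem_filter, hT]
    exact ⟨Finset.mem_erase.mpr ⟨huv, Finset.mem_erase.mpr ⟨huw, Finset.mem_univ u⟩⟩, hdu⟩
  -- the counting bound: |D| ≤ 3
  have hsumF : ∑ x : Fin n, degL x F = 2 * F.length := by
    apply sum_degL
    intro e he
    exact c1.2.1 e (by simp [he])
  have hw0 : degL w F = 0 := by
    apply degL_w_eq_zero
    intro e he x hx
    exact c1.2.2.1 e (by simp [he]) x hx
  have hsum_erase : degL w F + ∑ x ∈ Finset.univ.erase w, degL x F = ∑ x : Fin n, degL x F :=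
    Finset.add_sum_erase _ (fun x => degL x F) (Finset.mem_univ w)
  have hvmem : v ∈ Finset.univ.erase w := Finset.mem_erase.mpr ⟨hvw, Finset.mem_univ v⟩
  have hsum_T : degL v F + ∑ x ∈ T, degL x F = ∑ x ∈ Finset.univ.erase w, degL x F := by
    rw [hT]
    exact Finset.add_sum_erase _ (fun x => degL x F) hvmem
  have hTcard : T.card = n - 2 := by
    rw [hT, Finset.card_erase_of_mem hvmem, Finset.card_erase_of_mem (Finset.mem_univ w),
      Finset.card_univ, Fintype.card_fin]
    omega
  have hpoint : ∀ x ∈ T, (if x ∈ D then 1 else 0) + degL x F ≤ 2 := by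
    intro x hx
    have hxw : x ≠ w := by
      rw [hT] at hx
      exact Finset.ne_of_mem_erase (Finset.mem_of_mem_erase hx)
    by_cases hxD : x ∈ D
    · have hle : degL x F ≤ 1 := by
        rw [hD, Finset.mem_filter] at hxD
        exact hxD.2
      simp only [if_pos hxD]
      omega
    · simp only [if_neg hxD, zero_add]
      exact hdegFle x hxw
  have hsumpoint : ∑ x ∈ T, ((if x ∈ D then 1 else 0) + degL x F) ≤ ∑ _x ∈ T, 2 :=
    Finset.sum_le_sum hpoint
  rw [Finset.sum_add_distrib, Finset.sum_const, smul_eq_mul] at hsumpoint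
  have hDsubT : D ⊆ T := by
    rw [hD]; exact Finset.filter_subset _ _
  have hind : ∑ x ∈ T, (if x ∈ D then 1 else 0) = D.card := by
    rw [Finset.sum_ite_mem, Finset.inter_eq_right.mpr hDsubT]
    simp
  rw [hind] at hsumpoint
  have hcard_le : Flt.card ≤ D.card := Finset.card_le_card hsub
  omega

def P0 (w : Fin n) (H : List (Fin n × Fin n)) : Prop :=
  ∃ s, CL w (insideL w (H.take s))

def Aw1 (w : Fin n) (H : List (Fin n × Fin n)) : Prop :=
  ∃ e, CL w (insideL w H ++ [e])

def Aw2 (w : Fin n) (H : List (Fin n × Fin n)) : Prop :=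
  ∃ e f, CL w (insideL w H ++ [e, f])

def cnt (w : Fin n) (H : List (Fin n × Fin n)) : ℕ := (insideL w H).length

open Classical in
noncomputable def VV (w : Fin n) (H : List (Fin n × Fin n)) : ℝ :=
  if P0 w H then 1
  else if Aw1 w H then 1/((n:ℝ)-1)
  else if n-2 ≤ cnt w H then 0
  else if Aw2 w H then 3/((n:ℝ)-1)^2
  else if n-3 ≤ cnt w H then 0
  else 3/((n:ℝ)-1)^2

lemma VV_nonneg (hn : 5 ≤ n) (w : Fin n) (H : List (Fin n × Fin n)) : 0 ≤ VV w H := by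
  have h1 : (0:ℝ) ≤ 1/((n:ℝ)-1) := by
    apply div_nonneg zero_le_one
    have : (5:ℝ) ≤ (n:ℝ) := by exact_mod_cast hn
    linarith
  have h2 : (0:ℝ) ≤ 3/((n:ℝ)-1)^2 := by positivity
  unfold VV
  split_ifs <;> first | assumption | norm_num | omega

lemma VV_le_one (hn : 5 ≤ n) (w : Fin n) (H : List (Fin n × Fin n)) : VV w H ≤ 1 := by
  have hnn : (5:ℝ) ≤ (n:ℝ) := by exact_mod_cast hn
  have h1 : 1/((n:ℝ)-1) ≤ 1 := by
    rw [div_le_one (by linarith)]; linarith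
  have h2 : 3/((n:ℝ)-1)^2 ≤ 1 := by
    rw [div_le_one (by nlinarith)]; nlinarith
  unfold VV
  split_ifs <;> linarith

lemma insideL_append_outside {w : Fin n} {a b : Fin n} (h : a = w ∨ b = w)
    (H : List (Fin n × Fin n)) : insideL w (H ++ [(a,b)]) = insideL w H := by
  unfold insideL inducedEdgeList
  rw [List.filter_append]
  have : List.filter (fun p => decide (p.1 ∈ ({w}ᶜ : Finset (Fin n)) ∧
      p.2 ∈ ({w}ᶜ : Finset (Fin n)))) [(a,b)] = [] := by
    rcases h with rfl | rfl <;> simp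
  rw [this, List.append_nil]

lemma insideL_append_inside {w : Fin n} {a b : Fin n} (ha : a ≠ w) (hb : b ≠ w)
    (H : List (Fin n × Fin n)) : insideL w (H ++ [(a,b)]) = insideL w H ++ [s(a,b)] := by
  unfold insideL inducedEdgeList
  rw [List.filter_append, List.map_append]
  congr 1
  simp [ha, hb]

lemma CL_imp_P0 {w : Fin n} {H : List (Fin n × Fin n)}
    (h : CL w (insideL w H)) : P0 w H :=
  ⟨H.length, by rwa [List.take_length]⟩

lemma P0_append {w : Fin n} {H : List (Fin n × Fin n)} {p : Fin n × Fin n} :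
    P0 w (H ++ [p]) ↔ P0 w H ∨ CL w (insideL w (H ++ [p])) := by
  constructor
  · rintro ⟨s, hs⟩
    rcases le_or_gt s H.length with h | h
    · left
      exact ⟨s, by rwa [List.take_append_of_le_length h] at hs⟩
    · right
      rwa [List.take_of_length_le (by simp; omega)] at hs
  · rintro (⟨s, hs⟩ | h)
    · refine ⟨min s H.length, ?_⟩
      rw [List.take_append_of_le_length (min_le_right _ _)]
      rwa [show H.take (min s H.length) = H.take s by rw [List.take_eq_take_iff]; omega]
    · exact ⟨(H ++ [p]).length, by rwa [List.take_length]⟩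

lemma VV_outside {w : Fin n} {a b : Fin n} (h : a = w ∨ b = w)
    (H : List (Fin n × Fin n)) : VV w (H ++ [(a,b)]) = VV w H := by
  have hins : insideL w (H ++ [(a,b)]) = insideL w H := insideL_append_outside h H
  have hP0 : P0 w (H ++ [(a,b)]) ↔ P0 w H := by
    rw [P0_append, hins]
    constructor
    · rintro (h | h); exacts [h, CL_imp_P0 h]
    · exact Or.inl
  unfold VV Aw1 Aw2 cnt
  rw [hins]
  by_cases h0 : P0 w H
  · rw [if_pos (hP0.mpr h0), if_pos h0]
  · rw [if_neg (fun hh => h0 (hP0.mp hh)), if_neg h0]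

open Classical in
lemma key (hn : 5 ≤ n) (w : Fin n) (H : List (Fin n × Fin n)) (v : Fin n) :
    ∑ u0 : Fin n, VV w (H ++ [(u0, v)]) ≤ (n : ℝ) * VV w H := by
  have hnR : (5:ℝ) ≤ (n:ℝ) := by exact_mod_cast hn
  have hn1 : (n:ℝ) - 1 ≠ 0 := by linarith
  by_cases hv : v = w
  · -- every edge is outside
    have : ∀ u0 : Fin n, VV w (H ++ [(u0, v)]) = VV w H := fun u0 =>
      VV_outside (Or.inr hv) H
    rw [Finset.sum_congr rfl (fun u0 _ => this u0), Finset.sum_const, Finset.card_univ,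
      Fintype.card_fin, nsmul_eq_mul]
  · -- split off u0 = w
    have hsplit : VV w (H ++ [(w, v)]) + ∑ u0 ∈ Finset.univ.erase w, VV w (H ++ [(u0, v)])
        = ∑ u0 : Fin n, VV w (H ++ [(u0, v)]) :=
      Finset.add_sum_erase _ (fun u0 => VV w (H ++ [(u0, v)])) (Finset.mem_univ w)
    have hww : VV w (H ++ [(w, v)]) = VV w H := VV_outside (Or.inl rfl) H
    rw [← hsplit, hww]
    have hcard_erase : (Finset.univ.erase w).card = n - 1 := by
      rw [Finset.card_erase_of_mem (Finset.mem_univ w), Finset.card_univ, Fintype.card_fin]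
    -- facts for inside edges
    have hins : ∀ u0 : Fin n, u0 ≠ w →
        insideL w (H ++ [(u0, v)]) = insideL w H ++ [s(u0,v)] := fun u0 h =>
      insideL_append_inside h hv H
    by_cases h0 : P0 w H
    · -- VV w H = 1, bound everything by 1
      have hVH : VV w H = 1 := by unfold VV; rw [if_pos h0]
      rw [hVH]
      have hb : ∀ u0 ∈ Finset.univ.erase w, VV w (H ++ [(u0, v)]) ≤ 1 :=
        fun u0 _ => VV_le_one hn w _
      calc 1 + ∑ u0 ∈ Finset.univ.erase w, VV w (H ++ [(u0, v)])
          ≤ 1 + ∑ _u0 ∈ Finset.univ.erase w, (1:ℝ) :=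
            add_le_add_right (Finset.sum_le_sum hb) _
        _ = 1 + ((n:ℝ) - 1) := by
            rw [Finset.sum_const, hcard_erase, nsmul_eq_mul]
            congr 1
            push_cast [Nat.cast_sub (by omega : 1 ≤ n)]
            ring
        _ = (n:ℝ) * 1 := by ring
    · -- general next-state evaluation for u0 ≠ w
      have hP0next : ∀ u0 : Fin n, u0 ≠ w →
          (P0 w (H ++ [(u0, v)]) ↔ CL w (insideL w H ++ [s(u0,v)])) := by
        intro u0 h
        rw [P0_append, hins u0 h]
        constructor
        · rintro (hh | hh); exacts [absurd hh h0, hh]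
        · exact Or.inr
      by_cases h1 : Aw1 w H
      · -- VV w H = 1/(n-1)
        have hVH : VV w H = 1/((n:ℝ)-1) := by unfold VV; rw [if_neg h0, if_pos h1]
        obtain ⟨e0, c0⟩ := h1
        have hlen0 : (insideL w H).length + 1 = n - 1 := by
          have := CL_length c0; simpa using this
        have hb : ∀ u0 ∈ Finset.univ.erase w, VV w (H ++ [(u0, v)]) ≤
            (if CL w (insideL w H ++ [s(u0,v)]) then (1:ℝ) else 0) := by
          intro u0 hu0
          have hu0w : u0 ≠ w := Finset.ne_of_mem_erase hu0
          by_cases hCL : CL w (insideL w H ++ [s(u0,v)])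
          · rw [if_pos hCL]; exact VV_le_one hn w _
          · rw [if_neg hCL]
            have hP0' : ¬ P0 w (H ++ [(u0, v)]) := fun hh => hCL ((hP0next u0 hu0w).mp hh)
            have hA1' : ¬ Aw1 w (H ++ [(u0, v)]) := by
              rintro ⟨e, ce⟩
              rw [hins u0 hu0w] at ce
              have := CL_length ce
              simp only [List.length_append, List.length_cons, List.length_nil] at this
              omega
            have hc' : n - 2 ≤ cnt w (H ++ [(u0, v)]) := by
              unfold cnt
              rw [hins u0 hu0w]
              simp only [List.length_append, List.length_cons, List.length_nil]
              omega
            unfold VV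
            rw [if_neg hP0', if_neg hA1', if_pos hc']
        have hcard1 : (Finset.univ.filter
            (fun u0 : Fin n => u0 ≠ w ∧ CL w (insideL w H ++ [s(u0,v)]))).card ≤ 1 := by
          rw [Finset.card_le_one]
          intro a ha b hb
          rw [Finset.mem_filter] at ha hb
          by_contra hab
          exact close_unique hb.2.1 hab ha.2.2 hb.2.2
        calc VV w H + ∑ u0 ∈ Finset.univ.erase w, VV w (H ++ [(u0, v)])
            ≤ VV w H + ∑ u0 ∈ Finset.univ.erase w,
              (if CL w (insideL w H ++ [s(u0,v)]) then (1:ℝ) else 0) :=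
              add_le_add_right (Finset.sum_le_sum hb) _
          _ ≤ VV w H + 1 := by
              gcongr
              rw [Finset.sum_boole]
              have hss : (Finset.univ.erase w).filter
                  (fun u0 : Fin n => CL w (insideL w H ++ [s(u0,v)]))
                  ⊆ Finset.univ.filter
                  (fun u0 : Fin n => u0 ≠ w ∧ CL w (insideL w H ++ [s(u0,v)])) := by
                intro x hx
                rw [Finset.mem_filter] at hx ⊢
                exact ⟨Finset.mem_univ x, Finset.ne_of_mem_erase hx.1, hx.2⟩
              have := le_trans (Finset.card_le_card hss) hcard1
              exact_mod_cast this
          _ ≤ (n:ℝ) * VV w H := by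
              rw [hVH]
              have heq : (n:ℝ) * (1/((n:ℝ)-1)) - (1/((n:ℝ)-1) + 1) = 0 := by
                field_simp
                ring
              linarith
      by_cases h2 : n - 2 ≤ cnt w H
      · -- dead: VV w H = 0
        have hVH : VV w H = 0 := by
          unfold VV; rw [if_neg h0, if_neg h1, if_pos h2]
        rw [hVH]
        have hz : ∀ u0 ∈ Finset.univ.erase w, VV w (H ++ [(u0, v)]) = 0 := by
          intro u0 hu0
          have hu0w : u0 ≠ w := Finset.ne_of_mem_erase hu0
          have hCL : ¬ CL w (insideL w H ++ [s(u0,v)]) := fun hc => h1 ⟨s(u0,v), hc⟩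
          have hP0' : ¬ P0 w (H ++ [(u0, v)]) := fun hh => hCL ((hP0next u0 hu0w).mp hh)
          have hA1' : ¬ Aw1 w (H ++ [(u0, v)]) := by
            rintro ⟨e, ce⟩
            rw [hins u0 hu0w] at ce
            have := CL_length ce
            simp only [List.length_append, List.length_cons, List.length_nil] at this
            unfold cnt at h2
            omega
          have hc' : n - 2 ≤ cnt w (H ++ [(u0, v)]) := by
            unfold cnt at h2 ⊢
            rw [hins u0 hu0w]
            simp only [List.length_append, List.length_cons, List.length_nil]
            omega
          unfold VV
          rw [if_neg hP0', if_neg hA1', if_pos hc']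
        rw [Finset.sum_congr rfl hz]
        simp
      · by_cases h3 : Aw2 w H
        · -- two away: VV w H = B
          have hVH : VV w H = 3/((n:ℝ)-1)^2 := by
            unfold VV; rw [if_neg h0, if_neg h1, if_neg h2, if_pos h3]
          obtain ⟨ea, eb, cab⟩ := h3
          have hlen2 : (insideL w H).length + 2 = n - 1 := by
            have := CL_length cab; simpa using this
          have hb : ∀ u0 ∈ Finset.univ.erase w, VV w (H ++ [(u0, v)]) ≤
              (if (∃ e, CL w (insideL w H ++ [s(u0,v), e])) then 1/((n:ℝ)-1) else 0) := by
            intro u0 hu0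
            have hu0w : u0 ≠ w := Finset.ne_of_mem_erase hu0
            have hCL : ¬ CL w (insideL w H ++ [s(u0,v)]) := by
              intro hc
              have := CL_length hc
              simp only [List.length_append, List.length_cons, List.length_nil] at this
              omega
            have hP0' : ¬ P0 w (H ++ [(u0, v)]) := fun hh => hCL ((hP0next u0 hu0w).mp hh)
            have hAw1iff : Aw1 w (H ++ [(u0, v)]) ↔
                (∃ e, CL w (insideL w H ++ [s(u0,v), e])) := by
              unfold Aw1
              rw [hins u0 hu0w]
              constructor
              · rintro ⟨e, ce⟩
                exact ⟨e, by rwa [List.append_assoc] at ce⟩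
              · rintro ⟨e, ce⟩
                exact ⟨e, by rwa [List.append_assoc]⟩
            by_cases hgood : ∃ e, CL w (insideL w H ++ [s(u0,v), e])
            · rw [if_pos hgood]
              unfold VV
              rw [if_neg hP0', if_pos (hAw1iff.mpr hgood)]
            · rw [if_neg hgood]
              have hA1' : ¬ Aw1 w (H ++ [(u0, v)]) := fun hh => hgood (hAw1iff.mp hh)
              have hc' : n - 2 ≤ cnt w (H ++ [(u0, v)]) := by
                unfold cnt
                rw [hins u0 hu0w]
                simp only [List.length_append, List.length_cons, List.length_nil]
                omega
              unfold VV
              rw [if_neg hP0', if_neg hA1', if_pos hc']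
          have hsum3 : ∑ u0 ∈ Finset.univ.erase w,
              (if (∃ e, CL w (insideL w H ++ [s(u0,v), e])) then 1/((n:ℝ)-1) else 0)
              ≤ 3 * (1/((n:ℝ)-1)) := by
            rw [Finset.sum_ite, Finset.sum_const, Finset.sum_const_zero, add_zero,
              nsmul_eq_mul]
            have hss : (Finset.univ.erase w).filter
                (fun u0 : Fin n => ∃ e, CL w (insideL w H ++ [s(u0,v), e]))
                ⊆ Finset.univ.filter
                (fun u : Fin n => u ≠ w ∧ ∃ e, CL w (insideL w H ++ [s(u,v), e])) := by
              intro x hx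
              rw [Finset.mem_filter] at hx ⊢
              exact ⟨Finset.mem_univ x, Finset.ne_of_mem_erase hx.1, hx.2⟩
            have h3' := le_trans (Finset.card_le_card hss)
              (card_valid_le_three hn w (insideL w H) v)
            have : ((Finset.filter
                (fun u0 : Fin n => ∃ e, CL w (insideL w H ++ [s(u0,v), e]))
                (Finset.univ.erase w)).card : ℝ) ≤ 3 := by exact_mod_cast h3'
            have hpos : (0:ℝ) ≤ 1/((n:ℝ)-1) := by
              apply div_nonneg zero_le_one; linarith
            exact mul_le_mul_of_nonneg_right this hpos
          calc VV w H + ∑ u0 ∈ Finset.univ.erase w, VV w (H ++ [(u0, v)])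
              ≤ VV w H + 3 * (1/((n:ℝ)-1)) :=
                add_le_add_right (le_trans (Finset.sum_le_sum hb) hsum3) _
            _ ≤ (n:ℝ) * VV w H := by
                rw [hVH]
                have heq : (n:ℝ) * (3/((n:ℝ)-1)^2)
                    - (3/((n:ℝ)-1)^2 + 3 * (1/((n:ℝ)-1))) = 0 := by
                  field_simp
                  ring
                linarith
        · by_cases h4 : n - 3 ≤ cnt w H
          · -- dead at n-3: VV w H = 0
            have hVH : VV w H = 0 := by
              unfold VV; rw [if_neg h0, if_neg h1, if_neg h2, if_neg h3, if_pos h4]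
            rw [hVH]
            have hz : ∀ u0 ∈ Finset.univ.erase w, VV w (H ++ [(u0, v)]) = 0 := by
              intro u0 hu0
              have hu0w : u0 ≠ w := Finset.ne_of_mem_erase hu0
              have hCL : ¬ CL w (insideL w H ++ [s(u0,v)]) := by
                intro hc
                have := CL_length hc
                simp only [List.length_append, List.length_cons, List.length_nil] at this
                unfold cnt at h2 h4
                omega
              have hP0' : ¬ P0 w (H ++ [(u0, v)]) := fun hh => hCL ((hP0next u0 hu0w).mp hh)
              have hA1' : ¬ Aw1 w (H ++ [(u0, v)]) := by
                rintro ⟨e, ce⟩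
                rw [hins u0 hu0w, List.append_assoc] at ce
                exact h3 ⟨s(u0,v), e, ce⟩
              have hc' : n - 2 ≤ cnt w (H ++ [(u0, v)]) := by
                unfold cnt at h4 ⊢
                rw [hins u0 hu0w]
                simp only [List.length_append, List.length_cons, List.length_nil]
                omega
              unfold VV
              rw [if_neg hP0', if_neg hA1', if_pos hc']
            rw [Finset.sum_congr rfl hz]
            simp
          · -- early state: VV w H = B and every next state is ≤ B
            have hVH : VV w H = 3/((n:ℝ)-1)^2 := by
              unfold VV; rw [if_neg h0, if_neg h1, if_neg h2, if_neg h3, if_neg h4]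
            have hBpos : (0:ℝ) ≤ 3/((n:ℝ)-1)^2 := by positivity
            have hb : ∀ u0 ∈ Finset.univ.erase w,
                VV w (H ++ [(u0, v)]) ≤ 3/((n:ℝ)-1)^2 := by
              intro u0 hu0
              have hu0w : u0 ≠ w := Finset.ne_of_mem_erase hu0
              have hCL : ¬ CL w (insideL w H ++ [s(u0,v)]) := by
                intro hc
                have := CL_length hc
                simp only [List.length_append, List.length_cons, List.length_nil] at this
                unfold cnt at h4
                omega
              have hP0' : ¬ P0 w (H ++ [(u0, v)]) := fun hh => hCL ((hP0next u0 hu0w).mp hh)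
              have hA1' : ¬ Aw1 w (H ++ [(u0, v)]) := by
                rintro ⟨e, ce⟩
                rw [hins u0 hu0w, List.append_assoc] at ce
                exact h3 ⟨s(u0,v), e, ce⟩
              unfold VV
              rw [if_neg hP0', if_neg hA1']
              split_ifs <;> linarith
            calc VV w H + ∑ u0 ∈ Finset.univ.erase w, VV w (H ++ [(u0, v)])
                ≤ VV w H + ∑ _u0 ∈ Finset.univ.erase w, 3/((n:ℝ)-1)^2 :=
                  add_le_add_right (Finset.sum_le_sum hb) _
              _ = VV w H + ((n:ℝ)-1) * (3/((n:ℝ)-1)^2) := by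
                  rw [Finset.sum_const, hcard_erase, nsmul_eq_mul]
                  congr 1
                  push_cast [Nat.cast_sub (by omega : 1 ≤ n)]
                  ring
              _ ≤ (n:ℝ) * VV w H := by
                  rw [hVH]
                  have heq : (n:ℝ) * (3/((n:ℝ)-1)^2)
                      - (3/((n:ℝ)-1)^2 + ((n:ℝ)-1) * (3/((n:ℝ)-1)^2)) = 0 := by
                    field_simp
                    ring
                  linarith

open Classical in
noncomputable def qq (w : Fin n) (St : PreStrategy n) (t : ℕ)
    (H : List (Fin n × Fin n)) : ℝ :=
  ((Finset.univ.filter (fun u : Fin t → Fin n =>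
      P0 w (preBuildAux St H (List.ofFn u)))).card : ℝ) / (n:ℝ)^t

open Classical in
lemma qq_succ (w : Fin n) (St : PreStrategy n) (t : ℕ) (H : List (Fin n × Fin n)) :
    qq w St (t+1) H = (1/(n:ℝ)) * ∑ u0 : Fin n, qq w St t (H ++ [(u0, St H)]) := by
  have hcard : (Finset.univ.filter (fun u : Fin (t+1) → Fin n =>
      P0 w (preBuildAux St H (List.ofFn u)))).card
      = ∑ u0 : Fin n, (Finset.univ.filter (fun u : Fin t → Fin n =>
        P0 w (preBuildAux St (H ++ [(u0, St H)]) (List.ofFn u)))).card := by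
    rw [Finset.card_filter]
    rw [← Equiv.sum_comp (Fin.consEquiv (fun _ : Fin (t+1) => Fin n))
      (fun u : Fin (t+1) → Fin n =>
        if P0 w (preBuildAux St H (List.ofFn u)) then (1:ℕ) else 0)]
    rw [Fintype.sum_prod_type]
    refine Finset.sum_congr rfl (fun u0 _ => ?_)
    rw [Finset.card_filter]
    refine Finset.sum_congr rfl (fun g _ => ?_)
    congr 1
    have hfn : List.ofFn ((Fin.consEquiv (fun _ : Fin (t+1) => Fin n)) (u0, g)) = u0 :: List.ofFn g := by
      rw [List.ofFn_succ]
      simp [Fin.consEquiv]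
    rw [hfn]
    rfl
  unfold qq
  rw [hcard]
  push_cast
  rw [Finset.sum_div, Finset.mul_sum]
  refine Finset.sum_congr rfl (fun u0 _ => ?_)
  rw [pow_succ]
  field_simp

open Classical in
lemma qq_le (hn : 5 ≤ n) (w : Fin n) (St : PreStrategy n) :
    ∀ (t : ℕ) (H : List (Fin n × Fin n)), qq w St t H ≤ VV w H := by
  intro t
  induction t with
  | zero =>
    intro H
    unfold qq
    have huniv : (Finset.univ : Finset (Fin 0 → Fin n)).card = 1 := by
      simp [Finset.card_univ]
    by_cases hP : P0 w H
    · have : VV w H = 1 := by unfold VV; rw [if_pos hP]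
      rw [this]
      have hle : (Finset.univ.filter (fun u : Fin 0 → Fin n =>
          P0 w (preBuildAux St H (List.ofFn u)))).card ≤ 1 :=
        le_trans (Finset.card_le_card (Finset.filter_subset _ _)) (le_of_eq huniv)
      have hle' : ((Finset.univ.filter (fun u : Fin 0 → Fin n =>
          P0 w (preBuildAux St H (List.ofFn u)))).card : ℝ) ≤ 1 := by exact_mod_cast hle
      rw [pow_zero, div_one]
      exact hle'
    · have hempt : (Finset.univ.filter (fun u : Fin 0 → Fin n =>
          P0 w (preBuildAux St H (List.ofFn u)))) = ∅ := by
        ext u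
        simp only [Finset.mem_filter, Finset.notMem_empty, iff_false]
        rintro ⟨-, hu⟩
        have : List.ofFn u = ([] : List (Fin n)) := by simp
        rw [this] at hu
        exact hP hu
      rw [hempt]
      simp only [Finset.card_empty, Nat.cast_zero, zero_div]
      exact VV_nonneg hn w H
  | succ t ih =>
    intro H
    rw [qq_succ]
    have hsum : ∑ u0 : Fin n, qq w St t (H ++ [(u0, St H)])
        ≤ ∑ u0 : Fin n, VV w (H ++ [(u0, St H)]) :=
      Finset.sum_le_sum (fun u0 _ => ih _)
    have hkey := key hn w H (St H)
    have hnpos : (0:ℝ) < (n:ℝ) := by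
      have : (5:ℝ) ≤ (n:ℝ) := by exact_mod_cast hn
      linarith
    calc (1/(n:ℝ)) * ∑ u0 : Fin n, qq w St t (H ++ [(u0, St H)])
        ≤ (1/(n:ℝ)) * ((n:ℝ) * VV w H) := by
          apply mul_le_mul_of_nonneg_left _ (by positivity)
          exact le_trans hsum hkey
      _ = VV w H := by field_simp

lemma CL_nil_false (hn : 5 ≤ n) (w : Fin n) : ¬ CL w ([] : List (Sym2 (Fin n))) := by
  intro h
  obtain ⟨v, hv⟩ := Fintype.exists_ne_of_one_lt_card
    (by rw [Fintype.card_fin]; omega) w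
  have := h.2.2.2.1 v hv
  have hemp : {e : Sym2 (Fin n) | e ∈ ([] : List (Sym2 (Fin n)))} = ∅ := by simp
  rw [hemp] at this
  rw [SimpleGraph.fromEdgeSet_empty] at this
  rw [show (⊥ : SimpleGraph (Fin n)).neighborSet v = ∅ by ext x; simp] at this
  rw [Set.ncard_empty] at this
  omega

lemma insideL_nil (w : Fin n) : insideL w ([] : List (Fin n × Fin n)) = [] := rfl

lemma VV_nil (hn : 5 ≤ n) (w : Fin n) : VV w ([] : List (Fin n × Fin n)) = 3/((n:ℝ)-1)^2 := by
  have hP0 : ¬ P0 w ([] : List (Fin n × Fin n)) := by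
    rintro ⟨s, hs⟩
    rw [List.take_nil, insideL_nil] at hs
    exact CL_nil_false hn w hs
  have hA1 : ¬ Aw1 w ([] : List (Fin n × Fin n)) := by
    rintro ⟨e, c⟩
    rw [insideL_nil] at c
    have := CL_length c
    simp at this
    omega
  have hA2 : ¬ Aw2 w ([] : List (Fin n × Fin n)) := by
    rintro ⟨e, f, c⟩
    rw [insideL_nil] at c
    have := CL_length c
    simp at this
    omega
  have hc : cnt w ([] : List (Fin n × Fin n)) = 0 := rfl
  unfold VV
  rw [if_neg hP0, if_neg hA1, if_neg (by rw [hc]; omega), if_neg hA2,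
    if_neg (by rw [hc]; omega)]

lemma HIC_to_CL (hn : 1 ≤ n) {l : List (Fin n × Fin n)} (h : HasInducedCycle l) :
    ∃ w : Fin n, CL w (insideL w l) := by
  obtain ⟨S, hcard, h1, h2, h3, h4⟩ := h
  have hcompl : Sᶜ.card = 1 := by
    rw [Finset.card_compl, hcard, Fintype.card_fin]
    omega
  obtain ⟨w, hw⟩ := Finset.card_eq_one.mp hcompl
  have hS : S = {w}ᶜ := by
    rw [← compl_compl S, hw]
  subst hS
  refine ⟨w, h1, h2, ?_, ?_, h4⟩
  · intro e he x hx
    rw [show insideL w l = inducedEdgeList l {w}ᶜ from rfl, inducedEdgeList,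
      List.mem_map] at he
    obtain ⟨p, hp, rfl⟩ := he
    rw [List.mem_filter] at hp
    have hp2 := hp.2
    simp only [decide_eq_true_eq, Finset.mem_compl, Finset.mem_singleton] at hp2
    rcases Sym2.mem_iff.mp hx with rfl | rfl
    · exact hp2.1
    · exact hp2.2
  · intro v hv
    exact h3 v (by simp [hv])

open Classical in
lemma probPre_le (hn : 5 ≤ n) (St : PreStrategy n) (t : ℕ) :
    probPre n t St (fun l => ∃ s, HasInducedCycle (l.take s))
      ≤ (n:ℝ) * (3/((n:ℝ)-1)^2) := by
  have hnR : (5:ℝ) ≤ (n:ℝ) := by exact_mod_cast hn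
  have hsub : (Finset.univ.filter (fun u : Fin t → Fin n =>
      ∃ s, HasInducedCycle ((preTraj St (List.ofFn u)).take s)))
      ⊆ Finset.univ.biUnion (fun w : Fin n =>
        Finset.univ.filter (fun u : Fin t → Fin n =>
          P0 w (preBuildAux St [] (List.ofFn u)))) := by
    intro u hu
    rw [Finset.mem_filter] at hu
    obtain ⟨-, s0, hs0⟩ := hu
    obtain ⟨w, hw⟩ := HIC_to_CL (by omega) hs0
    rw [Finset.mem_biUnion]
    exact ⟨w, Finset.mem_univ w, Finset.mem_filter.mpr
      ⟨Finset.mem_univ u, s0, hw⟩⟩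
  have hcard := le_trans (Finset.card_le_card hsub) (Finset.card_biUnion_le)
  have hdiv : probPre n t St (fun l => ∃ s, HasInducedCycle (l.take s))
      ≤ ∑ w : Fin n, qq w St t [] := by
    unfold probPre qq
    rw [← Finset.sum_div]
    have hpow : (0:ℝ) < (n:ℝ)^t := by positivity
    rw [div_le_div_iff_of_pos_right hpow]
    exact_mod_cast hcard
  have hVV : ∑ w : Fin n, qq w St t [] ≤ (n:ℝ) * (3/((n:ℝ)-1)^2) := by
    calc ∑ w : Fin n, qq w St t [] ≤ ∑ w : Fin n, VV w [] :=
          Finset.sum_le_sum (fun w _ => qq_le hn w St t [])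
      _ = (n:ℝ) * (3/((n:ℝ)-1)^2) := by
          rw [Finset.sum_congr rfl (fun w _ => VV_nil hn w), Finset.sum_const,
            Finset.card_univ, Fintype.card_fin, nsmul_eq_mul]
  exact le_trans hdiv hVV

end NC

/-- For every pre-positional strategy, the probability that the process ever
produces a multigraph containing an induced simple `(n-1)`-cycle tends to `0`
as `n → ∞`.  (The probability of "ever" is the supremum over finite horizons of
the probability that this happens within the first `t` rounds.) -/

theorem pre_no_induced_cycle (Spre : (n : ℕ) → PreStrategy n) :
    Tendsto (fun n : ℕ =>
        ⨆ t : ℕ, probPre n t (Spre n) (fun l => ∃ s, HasInducedCycle (l.take s)))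
      atTop (nhds 0) := by
  have hnonneg : ∀ (n t : ℕ),
      0 ≤ probPre n t (Spre n) (fun l => ∃ s, HasInducedCycle (l.take s)) := by
    intro n t
    unfold probPre
    positivity
  have hupper : ∀ n : ℕ, 5 ≤ n → ∀ t : ℕ,
      probPre n t (Spre n) (fun l => ∃ s, HasInducedCycle (l.take s)) ≤ 12/(n:ℝ) := by
    intro n hn t
    have hnR : (5:ℝ) ≤ (n:ℝ) := by exact_mod_cast hn
    refine le_trans (NC.probPre_le hn (Spre n) t) ?_
    rw [mul_div_assoc' , div_le_div_iff₀ (by nlinarith) (by linarith)]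
    nlinarith [sq_nonneg ((n:ℝ) - 2)]
  apply tendsto_of_tendsto_of_tendsto_of_le_of_le' tendsto_const_nhds
    (tendsto_const_div_atTop_nhds_zero_nat 12)
  · filter_upwards [Filter.eventually_atTop.mpr ⟨5, fun n hn => hn⟩] with n hn
    have hbdd : BddAbove (Set.range (fun t : ℕ =>
        probPre n t (Spre n) (fun l => ∃ s, HasInducedCycle (l.take s)))) := by
      refine ⟨12/(n:ℝ), ?_⟩
      rintro x ⟨t, rfl⟩
      exact hupper n hn t
    exact le_trans (hnonneg n 0) (le_ciSup hbdd 0)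
  · filter_upwards [Filter.eventually_atTop.mpr ⟨5, fun n hn => hn⟩] with n hn
    have h0 : (0:ℝ) ≤ 12/(n:ℝ) := by positivity
    exact Real.iSup_le (fun t => hupper n hn t) h0
end

section
/- There exist a constant C > 0 and a post-positional strategy such that a.a.s. the post-positional semi-random graph process constructs, within C·n·ln n rounds, a multigraph containing an induced simple (n−1)-cycle. -/
open Filter

def nxt {n : ℕ} (u : Fin n) : Fin n :=
  if h : u.val + 2 ≤ n then ⟨u.val + 1, by omega⟩
  else ⟨1 % n, Nat.mod_lt _ u.pos⟩

def myStrat (n : ℕ) : PostStrategy n := fun h u =>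
  if u.val ≠ 0 ∧ (u, nxt u) ∉ h then nxt u else ⟨0, u.pos⟩

lemma nxt_val {n : ℕ} (hn : 2 ≤ n) (u : Fin n) :
    (nxt u).val = if u.val + 2 ≤ n then u.val + 1 else 1 := by
  unfold nxt
  have : 1 % n = 1 := Nat.mod_eq_of_lt (by omega)
  split <;> simp_all

lemma nxt_ne_zero {n : ℕ} (hn : 2 ≤ n) (u : Fin n) : (nxt u).val ≠ 0 := by
  have h := nxt_val hn u; split at h <;> omega

lemma nxt_ne_self {n : ℕ} (hn : 4 ≤ n) (u : Fin n) : nxt u ≠ u := by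
  have h := nxt_val (by omega) u
  have hu := u.isLt
  intro he; rw [he] at h; split at h <;> omega

lemma nxt_nxt_ne {n : ℕ} (hn : 4 ≤ n) (u : Fin n) (hu : u.val ≠ 0) :
    nxt (nxt u) ≠ u := by
  have h1 := nxt_val (by omega) u
  have h2 := nxt_val (by omega) (nxt u)
  have hu1 := u.isLt
  have hu2 := (nxt u).isLt
  intro he; rw [he] at h2
  split at h1 <;> split at h2 <;> omega

def prv {n : ℕ} (v : Fin n) : Fin n :=
  if h : 2 ≤ v.val then ⟨v.val - 1, by omega⟩
  else ⟨n - 1, by omega⟩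

lemma prv_val {n : ℕ} (v : Fin n) :
    (prv v).val = if 2 ≤ v.val then v.val - 1 else n - 1 := by
  unfold prv; split <;> simp_all

lemma prv_ne_zero {n : ℕ} (hn : 2 ≤ n) (v : Fin n) : (prv v).val ≠ 0 := by
  have h := prv_val v; split at h <;> omega

lemma nxt_prv {n : ℕ} (hn : 2 ≤ n) (v : Fin n) (hv : v.val ≠ 0) : nxt (prv v) = v := by
  have h1 := prv_val v
  have h2 := nxt_val hn (prv v)
  have := v.isLt
  apply Fin.ext
  split at h1 <;> split at h2 <;> omega

lemma prv_nxt {n : ℕ} (hn : 2 ≤ n) (v : Fin n) (hv : v.val ≠ 0) : prv (nxt v) = v := by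
  have h1 := nxt_val hn v
  have h2 := prv_val (nxt v)
  have := v.isLt
  apply Fin.ext
  split at h1 <;> split at h2 <;> omega

lemma prv_ne_nxt {n : ℕ} (hn : 4 ≤ n) (v : Fin n) (hv : v.val ≠ 0) : prv v ≠ nxt v := by
  intro h
  have h2 : nxt (nxt v) = v := by
    rw [← h, nxt_prv (by omega) v hv]
  exact nxt_nxt_ne hn v hv h2

def Good {n : ℕ} (h : List (Fin n × Fin n)) : Prop :=
  (∀ p ∈ h, p.2.val = 0 ∨ (p.1.val ≠ 0 ∧ p.2 = nxt p.1)) ∧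
  (h.filter (fun p => p.2.val ≠ 0)).Nodup

lemma good_step {n : ℕ} (hn : 2 ≤ n) (h : List (Fin n × Fin n)) (u : Fin n)
    (hG : Good h) : Good (h ++ [(u, myStrat n h u)]) := by
  obtain ⟨hA, hB⟩ := hG
  unfold myStrat
  split
  · next hc =>
    obtain ⟨hu, hmem⟩ := hc
    constructor
    · intro p hp
      rcases List.mem_append.1 hp with hp | hp
      · exact hA p hp
      · simp at hp; subst hp; exact Or.inr ⟨hu, rfl⟩
    · rw [List.filter_append]
      have : List.filter (fun p => decide (p.2.val ≠ 0)) [(u, nxt u)] = [(u, nxt u)] := by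
        simp [nxt_ne_zero hn u]
      rw [this]
      rw [List.nodup_append]
      refine ⟨hB, List.nodup_singleton _, ?_⟩
      intro p hp q hq hpq
      simp at hq
      subst hq; subst hpq
      exact hmem (List.mem_of_mem_filter hp)
  · constructor
    · intro p hp
      rcases List.mem_append.1 hp with hp | hp
      · exact hA p hp
      · simp at hp; subst hp; exact Or.inl rfl
    · rw [List.filter_append]
      have : List.filter (fun p => decide (p.2.val ≠ 0)) [(u, (⟨0, u.pos⟩ : Fin n))] = [] := by
        simp
      rw [this, List.append_nil]
      exact hB

lemma good_build {n : ℕ} (hn : 2 ≤ n) (h : List (Fin n × Fin n)) (us : List (Fin n))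
    (hG : Good h) : Good (postBuildAux (myStrat n) h us) := by
  induction us generalizing h with
  | nil => exact hG
  | cons u us ih => exact ih _ (good_step hn h u hG)

lemma mem_build {n : ℕ} (S : PostStrategy n) (h : List (Fin n × Fin n))
    (us : List (Fin n)) (p : Fin n × Fin n) (hp : p ∈ h) :
    p ∈ postBuildAux S h us := by
  induction us generalizing h with
  | nil => exact hp
  | cons u us ih => exact ih _ (List.mem_append_left _ hp)

lemma cover_build {n : ℕ} (h : List (Fin n × Fin n)) (us : List (Fin n))
    (u : Fin n) (hu : u ∈ us) (h0 : u.val ≠ 0) :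
    (u, nxt u) ∈ postBuildAux (myStrat n) h us := by
  induction us generalizing h with
  | nil => simp at hu
  | cons a us ih =>
    simp only [postBuildAux]
    rcases List.mem_cons.1 hu with rfl | hu
    · by_cases hmem : (u, nxt u) ∈ h
      · exact mem_build _ _ _ _ (List.mem_append_left _ hmem)
      · apply mem_build
        apply List.mem_append_right
        simp [myStrat, h0, hmem]
    · exact ih _ hu

lemma length_build {n : ℕ} (S : PostStrategy n) (h : List (Fin n × Fin n))
    (us : List (Fin n)) :
    (postBuildAux S h us).length = h.length + us.length := by
  induction us generalizing h with
  | nil => simp [postBuildAux]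
  | cons u us ih => simp [postBuildAux, ih]; omega

lemma main_det {n : ℕ} (hn : 4 ≤ n) (us : List (Fin n))
    (hcov : ∀ v : Fin n, v.val ≠ 0 → v ∈ us) :
    HasInducedCycle (postTraj (myStrat n) us) := by
  have hn2 : 2 ≤ n := by omega
  set l := postTraj (myStrat n) us with hl
  have hGood : Good l := by
    apply good_build hn2
    exact ⟨by simp, by simp⟩
  obtain ⟨hA, hB⟩ := hGood
  set Sfin : Finset (Fin n) := Finset.univ.filter (fun v : Fin n => v.val ≠ 0) with hSfin
  have hmemS : ∀ v : Fin n, v ∈ Sfin ↔ v.val ≠ 0 := by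
    intro v; simp [hSfin]
  set L : List (Fin n × Fin n) := l.filter (fun p => decide (p.2.val ≠ 0)) with hLdef
  have hL1 : ∀ p ∈ L, p.1.val ≠ 0 ∧ p.2 = nxt p.1 := by
    intro p hp
    rw [hLdef, List.mem_filter] at hp
    obtain ⟨hpl, hp2⟩ := hp
    simp at hp2
    rcases hA p hpl with h | h
    · omega
    · exact h
  have hL2 : L.Nodup := hB
  have hL3 : ∀ u : Fin n, u.val ≠ 0 → (u, nxt u) ∈ L := by
    intro u hu
    rw [hLdef, List.mem_filter]
    refine ⟨cover_build _ _ _ (hcov u hu) hu, ?_⟩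
    simp [nxt_ne_zero hn2 u]
  have hIE : inducedEdgeList l Sfin = L.map (fun p => s(p.1, p.2)) := by
    unfold inducedEdgeList
    congr 1
    apply List.filter_congr
    intro p hp
    rcases hA p hp with h | h
    · simp [hmemS, h]
    · simp [hmemS, h.1, nxt_ne_zero hn2, h.2]
  set E : List (Sym2 (Fin n)) := L.map (fun p => s(p.1, p.2)) with hEdef
  have hmemE : ∀ e : Sym2 (Fin n), e ∈ E ↔ ∃ u : Fin n, u.val ≠ 0 ∧ e = s(u, nxt u) := by
    intro e
    constructor
    · intro he
      rw [hEdef, List.mem_map] at he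
      obtain ⟨p, hp, rfl⟩ := he
      obtain ⟨h1, h2⟩ := hL1 p hp
      exact ⟨p.1, h1, by rw [h2]⟩
    · rintro ⟨u, hu, rfl⟩
      rw [hEdef, List.mem_map]
      exact ⟨(u, nxt u), hL3 u hu, rfl⟩
  refine ⟨Sfin, ?_, ?_, ?_, ?_, ?_⟩
  · -- card
    have hz : (⟨0, by omega⟩ : Fin n) ∈ Finset.univ := Finset.mem_univ _
    have : Sfin = Finset.univ.erase ⟨0, by omega⟩ := by
      ext v
      simp [hmemS, Finset.mem_erase, Fin.ext_iff]
    rw [this, Finset.card_erase_of_mem hz, Finset.card_univ, Fintype.card_fin]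
  · -- nodup
    rw [hIE]
    apply List.Nodup.map_on _ hL2
    intro x hx y hy hxy
    obtain ⟨hx1, hx2⟩ := hL1 x hx
    obtain ⟨hy1, hy2⟩ := hL1 y hy
    rw [hx2, hy2] at hxy
    rw [Sym2.eq_iff] at hxy
    rcases hxy with ⟨h1, _⟩ | ⟨h1, h2⟩
    · rw [Prod.ext_iff]; exact ⟨h1, by rw [hx2, hy2, h1]⟩
    · exfalso
      apply nxt_nxt_ne hn y.1 hy1
      rw [← h1, h2]
  · -- no diag
    intro e he
    rw [hIE] at he
    rw [hmemE] at he
    obtain ⟨u, hu, rfl⟩ := he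
    rw [Sym2.isDiag_iff_proj_eq]
    exact fun h => nxt_ne_self hn u h.symm
  · -- degrees
    intro v hv
    rw [hmemS] at hv
    have hset : (SimpleGraph.fromEdgeSet {e | e ∈ inducedEdgeList l Sfin}).neighborSet v
        = {prv v, nxt v} := by
      ext w
      rw [SimpleGraph.mem_neighborSet, SimpleGraph.fromEdgeSet_adj]
      simp only [Set.mem_setOf_eq, hIE, ← hEdef, hmemE]
      constructor
      · rintro ⟨⟨u, hu, he⟩, hne⟩
        rw [Sym2.eq_iff] at he
        rcases he with ⟨rfl, rfl⟩ | ⟨hvu, rfl⟩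
        · exact Or.inr rfl
        · left
          rw [hvu, prv_nxt hn2 w hu]
      · rintro (rfl | rfl)
        · constructor
          · refine ⟨prv v, by simpa using prv_ne_zero hn2 v, ?_⟩
            rw [nxt_prv hn2 v hv, Sym2.eq_swap]
          · intro h
            have h2 := congrArg nxt h
            rw [nxt_prv hn2 v hv] at h2
            exact nxt_ne_self hn v h2
        · constructor
          · exact ⟨v, hv, rfl⟩
          · exact fun h => nxt_ne_self hn v h.symm
    rw [hset]
    exact Set.ncard_pair (prv_ne_nxt hn v hv)
  · -- connected
    have h1mem : (⟨1, by omega⟩ : Fin n) ∈ (Sfin : Set (Fin n)) := by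
      simp [hmemS]
    set G := SimpleGraph.fromEdgeSet {e | e ∈ inducedEdgeList l Sfin} with hG
    have hadj : ∀ k : ℕ, ∀ hk1 : 1 ≤ k, ∀ hkn : k + 1 < n,
        G.Adj ⟨k, by omega⟩ ⟨k + 1, by omega⟩ := by
      intro k hk1 hkn
      rw [hG, SimpleGraph.fromEdgeSet_adj]
      constructor
      · simp only [Set.mem_setOf_eq, hIE, ← hEdef, hmemE]
        refine ⟨⟨k, by omega⟩, by intro h; simp at h; omega, ?_⟩
        have hnx : nxt (⟨k, by omega⟩ : Fin n) = ⟨k + 1, by omega⟩ := by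
          apply Fin.ext
          rw [nxt_val hn2]
          split <;> simp_all <;> omega
        rw [hnx]
      · simp [Fin.ext_iff]
    have hreach : ∀ k : ℕ, ∀ hk1 : 1 ≤ k, ∀ hk : k < n,
        (G.induce (Sfin : Set (Fin n))).Reachable
          ⟨⟨1, by omega⟩, h1mem⟩ ⟨⟨k, hk⟩, by simp [hmemS]; omega⟩ := by
      intro k hk1
      induction k, hk1 using Nat.le_induction with
      | base => intro hk; rfl
      | succ k hk ih =>
        intro hkn
        have hkn' : k < n := by omega
        refine (ih hkn').trans ?_
        apply SimpleGraph.Adj.reachable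
        show G.Adj _ _
        exact hadj k hk hkn
    rw [SimpleGraph.connected_iff]
    refine ⟨?_, ⟨⟨⟨1, by omega⟩, h1mem⟩⟩⟩
    intro a b
    obtain ⟨⟨av, ha⟩, hamem⟩ := a
    obtain ⟨⟨bv, hb⟩, hbmem⟩ := b
    have ha0 : av ≠ 0 := by
      have := hamem; rw [Finset.mem_coe, hmemS] at this; exact this
    have hb0 : bv ≠ 0 := by
      have := hbmem; rw [Finset.mem_coe, hmemS] at this; exact this
    have ra := hreach av (by omega) ha
    have rb := hreach bv (by omega) hb
    exact ra.symm.trans rb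

lemma traj_length {n : ℕ} (S : PostStrategy n) (us : List (Fin n)) :
    (postTraj S us).length = us.length := by
  simpa [postTraj] using length_build S [] us

lemma prob_ub (n t : ℕ) (hn : 1 ≤ n) (S : PostStrategy n) (P : List (Fin n × Fin n) → Prop) :
    probPost n t S P ≤ 1 := by
  classical
  unfold probPost
  rw [div_le_one (by positivity)]
  calc ((Finset.univ.filter fun u : Fin t → Fin n => P (postTraj S (List.ofFn u))).card : ℝ)
      ≤ ((Finset.univ : Finset (Fin t → Fin n)).card : ℝ) := by
        exact_mod_cast Finset.card_le_card (Finset.filter_subset _ _)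
    _ = (n : ℝ) ^ t := by
        rw [Finset.card_univ, Fintype.card_fun]
        simp

lemma prob_lb (n t : ℕ) (hn : 4 ≤ n) :
    1 - (n - 1 : ℝ) ^ (t + 1) / (n : ℝ) ^ t ≤
      probPost n t (myStrat n) (fun l => ∃ s ≤ t, HasInducedCycle (l.take s)) := by
  classical
  unfold probPost
  set A : Finset (Fin t → Fin n) :=
    Finset.univ.filter (fun u => ∀ v : Fin n, v.val ≠ 0 → ∃ i, u i = v) with hA
  have hsub : A ⊆ Finset.univ.filter
      (fun u : Fin t → Fin n =>
        ∃ s ≤ t, HasInducedCycle ((postTraj (myStrat n) (List.ofFn u)).take s)) := by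
    intro u hu
    rw [hA, Finset.mem_filter] at hu
    rw [Finset.mem_filter]
    refine ⟨Finset.mem_univ _, t, le_refl t, ?_⟩
    have hlen : (postTraj (myStrat n) (List.ofFn u)).length = t := by
      rw [traj_length, List.length_ofFn]
    rw [List.take_of_length_le hlen.le]
    apply main_det hn
    intro v hv
    rw [List.mem_ofFn]
    obtain ⟨i, hi⟩ := hu.2 v hv
    exact ⟨i, hi⟩
  -- complement bound
  have hcompl : ((Finset.univ : Finset (Fin t → Fin n)) \ A).card ≤ (n - 1) ^ (t + 1) := by
    have hsub2 : (Finset.univ : Finset (Fin t → Fin n)) \ A ⊆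
        (Finset.univ.filter (fun v : Fin n => v.val ≠ 0)).biUnion
          (fun v => Fintype.piFinset (fun _ : Fin t => Finset.univ.erase v)) := by
      intro u hu
      rw [Finset.mem_sdiff, hA, Finset.mem_filter] at hu
      push_neg at hu
      obtain ⟨v, hv, hvz⟩ := hu.2 hu.1
      rw [Finset.mem_biUnion]
      refine ⟨v, by simp [hv], ?_⟩
      rw [Fintype.mem_piFinset]
      intro i
      rw [Finset.mem_erase]
      exact ⟨hvz i, Finset.mem_univ _⟩
    calc ((Finset.univ : Finset (Fin t → Fin n)) \ A).card
        ≤ ((Finset.univ.filter (fun v : Fin n => v.val ≠ 0)).biUnion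
            (fun v => Fintype.piFinset (fun _ : Fin t => Finset.univ.erase v))).card :=
          Finset.card_le_card hsub2
      _ ≤ ∑ v ∈ Finset.univ.filter (fun v : Fin n => v.val ≠ 0),
            (Fintype.piFinset (fun _ : Fin t => Finset.univ.erase v)).card :=
          Finset.card_biUnion_le
      _ ≤ ∑ v ∈ Finset.univ.filter (fun v : Fin n => v.val ≠ 0), (n - 1) ^ t := by
          apply Finset.sum_le_sum
          intro v _
          rw [Fintype.card_piFinset]
          apply le_of_eq
          rw [Finset.prod_const]
          simp [Finset.card_erase_of_mem]
      _ ≤ (n - 1) * (n - 1) ^ t := by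
          rw [Finset.sum_const, smul_eq_mul]
          apply Nat.mul_le_mul_right
          calc (Finset.univ.filter (fun v : Fin n => v.val ≠ 0)).card
              ≤ ((Finset.univ : Finset (Fin n)).erase ⟨0, by omega⟩).card := by
                apply Finset.card_le_card
                intro v hv
                rw [Finset.mem_filter] at hv
                rw [Finset.mem_erase]
                exact ⟨by intro h; rw [h] at hv; exact hv.2 rfl, Finset.mem_univ _⟩
            _ = n - 1 := by
                rw [Finset.card_erase_of_mem (Finset.mem_univ _), Finset.card_univ,
                  Fintype.card_fin]
      _ = (n - 1) ^ (t + 1) := by ring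
  have hcard : ((n : ℝ) ^ t - (n - 1 : ℝ) ^ (t + 1)) ≤ (A.card : ℝ) := by
    have h1 : ((Finset.univ : Finset (Fin t → Fin n)) \ A).card + A.card
        = (Finset.univ : Finset (Fin t → Fin n)).card :=
      Finset.card_sdiff_add_card_eq_card (Finset.subset_univ A)
    have h2 : ((Finset.univ : Finset (Fin t → Fin n)).card : ℝ) = (n : ℝ) ^ t := by
      rw [Finset.card_univ, Fintype.card_fun]
      simp
    have h3 : (((Finset.univ : Finset (Fin t → Fin n)) \ A).card : ℝ)
        ≤ ((n : ℝ) - 1) ^ (t + 1) := by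
      calc (((Finset.univ : Finset (Fin t → Fin n)) \ A).card : ℝ)
          ≤ (((n - 1) ^ (t + 1) : ℕ) : ℝ) := by exact_mod_cast hcompl
        _ ≤ ((n : ℝ) - 1) ^ (t + 1) := by
            rw [Nat.cast_pow]
            apply pow_le_pow_left₀ (by positivity)
            have : ((n - 1 : ℕ) : ℝ) = (n : ℝ) - 1 := by
              push_cast [Nat.cast_sub (by omega : 1 ≤ n)]
              ring
            rw [this]
    have h4 : ((Finset.univ : Finset (Fin t → Fin n)).card : ℝ)
        = (((Finset.univ : Finset (Fin t → Fin n)) \ A).card : ℝ) + (A.card : ℝ) := by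
      exact_mod_cast h1.symm
    rw [h2] at h4
    linarith
  have hfilt : (A.card : ℝ) ≤
      ((Finset.univ.filter (fun u : Fin t → Fin n =>
        ∃ s ≤ t, HasInducedCycle ((postTraj (myStrat n) (List.ofFn u)).take s))).card : ℝ) := by
    exact_mod_cast Finset.card_le_card hsub
  have hnpos : (0:ℝ) < (n : ℝ) ^ t := by positivity
  calc 1 - ((n:ℝ) - 1) ^ (t + 1) / (n:ℝ) ^ t
      = ((n:ℝ) ^ t - ((n:ℝ) - 1) ^ (t + 1)) / (n:ℝ) ^ t := by
        field_simp
    _ ≤ (A.card : ℝ) / (n:ℝ) ^ t := by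
        exact (div_le_div_iff_of_pos_right hnpos).2 hcard
    _ ≤ _ := by
        apply (div_le_div_iff_of_pos_right hnpos).2
        simp only [Finset.filter_congr_decidable]
        convert hfilt using 4

lemma bound_small (n : ℕ) (hn : 4 ≤ n) :
    ((n:ℝ) - 1) ^ (⌈(2:ℝ) * n * Real.log n⌉₊ + 1) / (n:ℝ) ^ ⌈(2:ℝ) * n * Real.log n⌉₊
      ≤ 1 / n := by
  set t := ⌈(2:ℝ) * n * Real.log n⌉₊ with ht'
  have hn0 : (0:ℝ) < n := by positivity
  have hn1 : (1:ℝ) ≤ n := by exact_mod_cast by omega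
  have h1 : ((n:ℝ)-1)^(t+1) / (n:ℝ)^t = ((n:ℝ)-1) * (((n:ℝ)-1)/n)^t := by
    rw [pow_succ, div_pow]; ring
  rw [h1]
  have hfrac : ((n:ℝ)-1)/n ≤ Real.exp (-(1/n)) := by
    have h0 := Real.add_one_le_exp (-(1/(n:ℝ)))
    have h2 : ((n:ℝ)-1)/n = 1 - 1/n := by field_simp
    rw [h2]; linarith
  have hfrac0 : (0:ℝ) ≤ ((n:ℝ)-1)/n := by
    apply div_nonneg _ hn0.le; linarith
  have hpow : (((n:ℝ)-1)/n)^t ≤ Real.exp (-(1/n))^t := pow_le_pow_left₀ hfrac0 hfrac t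
  have hexp : Real.exp (-(1/(n:ℝ)))^t = Real.exp (-((t:ℝ)/n)) := by
    rw [← Real.exp_nat_mul]; congr 1; ring
  have ht : (2:ℝ) * n * Real.log n ≤ (t:ℝ) := Nat.le_ceil _
  have hlog : 0 ≤ Real.log n := Real.log_nonneg hn1
  have hexp2 : Real.exp (-((t:ℝ)/(n:ℝ))) ≤ Real.exp (-(2 * Real.log n)) := by
    apply Real.exp_le_exp.2
    rw [neg_le_neg_iff, le_div_iff₀ hn0]
    nlinarith
  have hval : Real.exp (-(2 * Real.log n)) = 1 / (n:ℝ)^2 := by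
    rw [Real.exp_neg]
    rw [show (2:ℝ) * Real.log n = ((2:ℕ):ℝ) * Real.log n by norm_num]
    rw [Real.exp_nat_mul, Real.exp_log hn0]
    rw [one_div]
  have hexp0 : (0:ℝ) ≤ Real.exp (-((t:ℝ)/n)) := (Real.exp_pos _).le
  have hchain : (((n:ℝ)-1)/n)^t ≤ 1 / (n:ℝ)^2 := by
    rw [← hval]
    calc (((n:ℝ)-1)/n)^t ≤ Real.exp (-(1/n))^t := hpow
      _ = Real.exp (-((t:ℝ)/n)) := hexp
      _ ≤ Real.exp (-(2 * Real.log n)) := hexp2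
  calc ((n:ℝ)-1) * (((n:ℝ)-1)/n)^t ≤ ((n:ℝ)-1) * (1 / (n:ℝ)^2) := by
        apply mul_le_mul_of_nonneg_left hchain (by linarith)
    _ ≤ 1 / n := by
        rw [mul_one_div, div_le_div_iff₀ (by positivity) hn0]
        nlinarith

/-- There are a constant `C > 0` and a post-positional strategy that a.a.s.
constructs, within `C·n·ln n` rounds, a multigraph containing an induced simple
`(n-1)`-cycle. -/
theorem post_induced_cycle :
    ∃ C : ℝ, 0 < C ∧ ∃ Spost : (n : ℕ) → PostStrategy n,
      Tendsto (fun n : ℕ => probPost n ⌈C * (n : ℝ) * Real.log n⌉₊ (Spost n)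
          (fun l => ∃ s ≤ ⌈C * (n : ℝ) * Real.log n⌉₊, HasInducedCycle (l.take s)))
        atTop (nhds 1) := by
  refine ⟨2, by norm_num, fun n => myStrat n, ?_⟩
  have hg : Filter.Tendsto (fun n : ℕ => 1 - 1/(n:ℝ)) Filter.atTop (nhds 1) := by
    have h2 := tendsto_one_div_atTop_nhds_zero_nat (𝕜 := ℝ)
    simpa using (tendsto_const_nhds :
      Filter.Tendsto (fun _ : ℕ => (1:ℝ)) Filter.atTop (nhds 1)).sub h2
  apply tendsto_of_tendsto_of_tendsto_of_le_of_le' hg tendsto_const_nhds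
  · filter_upwards [Filter.eventually_ge_atTop 4] with n hn
    have hlb := prob_lb n ⌈(2:ℝ) * n * Real.log n⌉₊ hn
    have hsm := bound_small n hn
    calc 1 - 1/(n:ℝ) ≤ 1 - ((n:ℝ) - 1) ^ (⌈(2:ℝ) * n * Real.log n⌉₊ + 1) /
          (n:ℝ) ^ ⌈(2:ℝ) * n * Real.log n⌉₊ := by linarith
      _ ≤ _ := hlb
  · filter_upwards [Filter.eventually_ge_atTop 4] with n hn
    exact prob_ub n _ (by omega) _ _
end
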